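/- Consider the population risk φ(x) = f(x) + R(x) + ι_X(x) with f(x) = E_{ξ∼P}[f(x, ξ)] and the empirical risk φ_S(x) = f_S(x) + R(x) + ι_X(x) with f_S(x) = (1/m) Σ_{i=1}^m f(x, ξ_i), where R : ℝ^d → ℝ is real-valued, closed and convex and X is a nonempty, closed, convex set. Assume (Assumption A) f(x) < ∞ for all x in an open set O, and (Assumption B) for every x ∈ O there exist ε(x) > 0 and nonnegative λ(x, ξ) with E[λ(x, ξ)] < ∞ such that y ↦ f(y, ξ) + (λ(x,ξ)/2)‖y‖² is convex on B(x; ε(x)). Let G and G_S be selections of ∂f and ∂f_S on O, i.e. G(x) ∈ ∂f(x) and G_S(x) ∈ ∂f_S(x) for every x ∈ O. Then with probability one, sup_{x ∈ O ∩ X} H(∂φ(x), ∂φ_S(x)) ≤ sup_{x ∈ O} ‖G(x) − G_S(x)‖. -/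

import Mathlib

open MeasureTheory Metric Set Filter
open scoped InnerProductSpace ENNReal NNReal Topology

noncomputable section

variable {E : Type*} [NormedAddCommGroup E] [InnerProductSpace ℝ E]

/-- The Fréchet subdifferential of a real-valued function `f` at `x`. -/
def fsubdiff (f : E → ℝ) (x : E) : Set E :=
  {g | ∀ ε > 0, ∀ᶠ y in nhds x, f x + ⟪g, y - x⟫_ℝ - ε * ‖y - x‖ ≤ f y}

/-- The Fréchet subdifferential of an `(ℝ ∪ {+∞})`-valued function `f` at `x`. -/
def fsubdiffE (f : E → EReal) (x : E) : Set E :=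
  {g | ∀ ε > 0, ∀ᶠ y in nhds x, f x + ((⟪g, y - x⟫_ℝ - ε * ‖y - x‖ : ℝ) : EReal) ≤ f y}

open scoped Classical in
/-- The `+∞`-valued indicator `ι_X` of a set `X`. -/
def indicatorE {α : Type*} (X : Set α) (x : α) : EReal := if x ∈ X then 0 else ⊤

/-- The set of subgradients of `F` at `x` valid on all of `S`. -/
def ballSG (F : E → ℝ) (x : E) (S : Set E) : Set E :=
  {k | ∀ y ∈ S, F x + ⟪k, y - x⟫_ℝ ≤ F y}

lemma sq_expand (l : ℝ) (x y : E) :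
    l / 2 * ‖y‖ ^ 2 = l / 2 * ‖x‖ ^ 2 + ⟪l • x, y - x⟫_ℝ + l / 2 * ‖y - x‖ ^ 2 := by
  have h : x + (y - x) = y := by abel
  have h2 : ‖y‖ ^ 2 = ‖x‖ ^ 2 + 2 * ⟪x, y - x⟫_ℝ + ‖y - x‖ ^ 2 := by
    conv_lhs => rw [← h]
    exact norm_add_sq_real x (y - x)
  rw [real_inner_smul_left]
  linear_combination (l / 2) * h2

lemma localToGlobal {S : Set E} {Q : E → ℝ} (hQ : ConvexOn ℝ S Q) {y : E} (hy : y ∈ S) {g : E}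
    (h : ∀ ε > 0, ∀ᶠ w in 𝓝 y, w ∈ S → Q y + ⟪g, w - y⟫_ℝ - ε * ‖w - y‖ ≤ Q w) :
    g ∈ ballSG Q y S := by
  intro z hz
  rcases eq_or_ne z y with rfl | hzy
  · simp
  have hz0 : (0:ℝ) < ‖z - y‖ := by
    rw [norm_pos_iff]; exact sub_ne_zero_of_ne hzy
  have key : ∀ ε > 0, Q y + ⟪g, z - y⟫_ℝ - ε * ‖z - y‖ ≤ Q z := by
    intro ε hε
    obtain ⟨δ, hδ, hδh⟩ := Metric.eventually_nhds_iff_ball.mp (h ε hε)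
    set t : ℝ := min (1/2) (δ / (2 * ‖z - y‖)) with ht
    have ht0 : 0 < t := lt_min (by norm_num) (by positivity)
    have ht1 : t ≤ 1 := le_trans (min_le_left _ _) (by norm_num)
    set w := y + t • (z - y) with hw
    have hwy : w - y = t • (z - y) := by rw [hw]; abel
    have hwS : w ∈ S := by
      have : w = (1 - t) • y + t • z := by
        rw [hw]; rw [smul_sub, sub_smul, one_smul]; abel
      rw [this]
      exact hQ.1 hy hz (by linarith) ht0.le (by ring)
    have hwball : w ∈ Metric.ball y δ := by
      rw [mem_ball, dist_eq_norm, hwy, norm_smul, Real.norm_eq_abs, abs_of_pos ht0]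
      have h' : t ≤ δ / (2 * ‖z - y‖) := min_le_right _ _
      rw [le_div_iff₀ (by positivity)] at h'
      nlinarith [h']
    have h1 := hδh w hwball hwS
    have hQw : Q w ≤ (1 - t) * Q y + t * Q z := by
      have heq : w = (1 - t) • y + t • z := by
        rw [hw]; rw [smul_sub, sub_smul, one_smul]; abel
      have := hQ.2 hy hz (show (0:ℝ) ≤ 1 - t by linarith) ht0.le (by ring)
      rw [← heq] at this
      simpa [smul_eq_mul] using this
    rw [hwy, real_inner_smul_right, norm_smul, Real.norm_eq_abs, abs_of_pos ht0] at h1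
    -- h1 : Q y + t * ⟪g, z-y⟫ - ε * (t * ‖z-y‖) ≤ Q w
    have h3 : Q y + t * ⟪g, z - y⟫_ℝ - ε * (t * ‖z - y‖) ≤ (1 - t) * Q y + t * Q z :=
      le_trans h1 hQw
    have h4 : t * (Q y + ⟪g, z - y⟫_ℝ - ε * ‖z - y‖) ≤ t * Q z := by nlinarith
    exact le_of_mul_le_mul_left (by linarith [h4]) ht0
  by_contra hcon
  push_neg at hcon
  set c := Q y + ⟪g, z - y⟫_ℝ - Q z with hc
  have hcpos : 0 < c := by rw [hc]; linarith
  have := key (c / (2 * ‖z - y‖)) (by positivity)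
  have h5 : c / (2 * ‖z - y‖) * ‖z - y‖ = c / 2 := by field_simp
  rw [h5] at this
  linarith

lemma frechet_to_ball {f : E → ℝ} {l : ℝ} (hl : 0 ≤ l) {x : E} {ε : ℝ}
    (hc : ConvexOn ℝ (ball x ε) (fun y => f y + l / 2 * ‖y‖ ^ 2)) {y : E} (hy : y ∈ ball x ε)
    {g : E} (hg : g ∈ fsubdiff f y) :
    g + l • y ∈ ballSG (fun y => f y + l / 2 * ‖y‖ ^ 2) y (ball x ε) := by
  apply localToGlobal hc hy
  intro ε' hε'
  filter_upwards [hg ε' hε'] with w hw _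
  have h2 := sq_expand l y w
  have hq : 0 ≤ l / 2 * ‖w - y‖ ^ 2 := by positivity
  have hin : ⟪g + l • y, w - y⟫_ℝ = ⟪g, w - y⟫_ℝ + ⟪l • y, w - y⟫_ℝ := inner_add_left _ _ _
  show f y + l / 2 * ‖y‖ ^ 2 + ⟪g + l • y, w - y⟫_ℝ - ε' * ‖w - y‖ ≤ f w + l / 2 * ‖w‖ ^ 2
  rw [hin]
  linarith [hw]

section Part2
variable {E : Type*} [NormedAddCommGroup E] [InnerProductSpace ℝ E]

lemma phi_eq_of_mem {f R : E → ℝ} {X : Set E} {y : E} (hy : y ∈ X) :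
    ((f y : ℝ) : EReal) + (R y : EReal) + indicatorE X y = ((f y + R y : ℝ) : EReal) := by
  rw [indicatorE, if_pos hy, add_zero, EReal.coe_add]

lemma phi_eq_of_not_mem {f R : E → ℝ} {X : Set E} {y : E} (hy : y ∉ X) :
    ((f y : ℝ) : EReal) + (R y : EReal) + indicatorE X y = ⊤ := by
  rw [indicatorE, if_neg hy, ← EReal.coe_add, EReal.coe_add_top]

lemma mem_fsubdiffE_iff {f R : E → ℝ} {X : Set E} {x : E} (hx : x ∈ X) {g : E} :
    g ∈ fsubdiffE (fun y => ((f y : ℝ) : EReal) + (R y : EReal) + indicatorE X y) x ↔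
      ∀ ε > 0, ∀ᶠ y in 𝓝 x, y ∈ X →
        f x + R x + ⟪g, y - x⟫_ℝ - ε * ‖y - x‖ ≤ f y + R y := by
  constructor
  · intro hg ε hε
    filter_upwards [hg ε hε] with y hy hyX
    rw [phi_eq_of_mem hx, phi_eq_of_mem hyX, ← EReal.coe_add, EReal.coe_le_coe_iff] at hy
    linarith
  · intro hg ε hε
    filter_upwards [hg ε hε] with y hy
    by_cases hyX : y ∈ X
    · rw [phi_eq_of_mem hx, phi_eq_of_mem hyX, ← EReal.coe_add, EReal.coe_le_coe_iff]
      have := hy hyX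
      linarith
    · rw [phi_eq_of_not_mem hyX]
      exact le_top

lemma ball_to_fsubdiffE {f R : E → ℝ} {X : Set E} {x : E} (hx : x ∈ X) {ε l : ℝ}
    (hε : 0 < ε) (hl : 0 ≤ l) {h : E}
    (hk : ∀ y ∈ ball x ε ∩ X,
      f x + l / 2 * ‖x‖ ^ 2 + R x + ⟪h, y - x⟫_ℝ ≤ f y + l / 2 * ‖y‖ ^ 2 + R y) :
    h - l • x ∈ fsubdiffE (fun y => ((f y : ℝ) : EReal) + (R y : EReal) + indicatorE X y) x := by
  rw [mem_fsubdiffE_iff hx]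
  intro ε' hε'
  have hδ : 0 < min ε (2 * ε' / (l + 1)) := lt_min hε (by positivity)
  filter_upwards [Metric.ball_mem_nhds x hδ] with y hy hyX
  have hyb : y ∈ ball x ε := mem_of_mem_of_subset hy (ball_subset_ball (min_le_left _ _))
  have h1 := hk y ⟨hyb, hyX⟩
  have h2 := sq_expand l x y
  have hin : ⟪h - l • x, y - x⟫_ℝ = ⟪h, y - x⟫_ℝ - ⟪l • x, y - x⟫_ℝ := inner_sub_left _ _ _
  have hb : ‖y - x‖ < 2 * ε' / (l + 1) := by
    have := mem_ball_iff_norm.mp hy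
    exact lt_of_lt_of_le this (min_le_right _ _)
  have hb' : (l + 1) * ‖y - x‖ ≤ 2 * ε' := by
    rw [lt_div_iff₀ (by positivity)] at hb
    nlinarith [hb]
  have hsq : l / 2 * ‖y - x‖ ^ 2 ≤ ε' * ‖y - x‖ := by
    nlinarith [norm_nonneg (y - x), mul_le_mul_of_nonneg_left hb' (norm_nonneg (y - x))]
  rw [hin]
  linarith

lemma sumrule [FiniteDimensional ℝ E] {F Rf : E → ℝ} {X : Set E} (hXcv : Convex ℝ X)
    {x : E} (hx : x ∈ X) {ε : ℝ} (hε : 0 < ε)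
    (hF : ConvexOn ℝ (ball x ε) F) (hR : ConvexOn ℝ Set.univ Rf)
    {h : E} (hh : ∀ y ∈ ball x ε ∩ X, F x + Rf x + ⟪h, y - x⟫_ℝ ≤ F y + Rf y) :
    ∃ v : E, (∀ y ∈ ball x ε, F x + ⟪h + v, y - x⟫_ℝ ≤ F y) ∧
      (∀ y ∈ ball x ε ∩ X, Rf x + ⟪-v, y - x⟫_ℝ ≤ Rf y) := by
  classical
  set u : E → ℝ := fun y => F y - F x - ⟪h, y - x⟫_ℝ with hu
  have hFc : ContinuousOn F (ball x ε) := ConvexOn.continuousOn isOpen_ball hF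
  have hucont : ContinuousOn u (ball x ε) :=
    (hFc.sub continuousOn_const).sub
      ((continuous_const.inner (continuous_id.sub continuous_const)).continuousOn)
  have huineq : ∀ {p1 q1 : E} {a b : ℝ}, p1 ∈ ball x ε → q1 ∈ ball x ε → 0 ≤ a → 0 ≤ b →
      a + b = 1 → u (a • p1 + b • q1) ≤ a * u p1 + b * u q1 := by
    intro p1 q1 a b hp1 hq1 ha hb hab
    have hFi := hF.2 hp1 hq1 ha hb hab
    simp only [hu, smul_eq_mul] at hFi ⊢
    have hxx : a • x + b • x = x := by rw [← add_smul, hab, one_smul]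
    have hptd : a • p1 + b • q1 - x = a • (p1 - x) + b • (q1 - x) := by
      calc a • p1 + b • q1 - x = a • p1 + b • q1 - (a • x + b • x) := by rw [hxx]
        _ = a • (p1 - x) + b • (q1 - x) := by rw [smul_sub, smul_sub]; abel
    have hip : ⟪h, a • p1 + b • q1 - x⟫_ℝ
        = a * ⟪h, p1 - x⟫_ℝ + b * ⟪h, q1 - x⟫_ℝ := by
      rw [hptd, inner_add_right, real_inner_smul_right, real_inner_smul_right]
    rw [hip]
    have hfx : a * F x + b * F x = F x := by rw [← add_mul, hab, one_mul]
    linarith [hFi, hfx]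
  set A : Set (E × ℝ) := {p | p.1 ∈ ball x ε ∧ u p.1 < p.2} with hA
  set C : Set (E × ℝ) := {p | p.1 ∈ ball x ε ∧ p.1 ∈ X ∧ p.2 ≤ Rf x - Rf p.1} with hC
  have hAopen : IsOpen A := by
    have heq : A = (ball x ε ×ˢ (univ : Set ℝ)) ∩ (fun p : E × ℝ => u p.1 - p.2) ⁻¹' Iio 0 := by
      ext p; simp [hA, Set.mem_prod, sub_neg]
    rw [heq]
    apply ContinuousOn.isOpen_inter_preimage _ (isOpen_ball.prod isOpen_univ) isOpen_Iio
    exact (hucont.comp continuous_fst.continuousOn (fun p hp => hp.1)).sub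
      continuous_snd.continuousOn
  have hAconv : Convex ℝ A := by
    rintro ⟨p1, p2⟩ ⟨hp1, hp2⟩ ⟨q1, q2⟩ ⟨hq1, hq2⟩ a b ha hb hab
    simp only [hA, mem_setOf_eq, Prod.smul_mk, Prod.mk_add_mk, smul_eq_mul] at *
    refine ⟨(convex_ball x ε) hp1 hq1 ha hb hab, ?_⟩
    have hle2 : b * u q1 ≤ b * q2 := mul_le_mul_of_nonneg_left hq2.le hb
    have hstrict : a * u p1 + b * u q1 < a * p2 + b * q2 := by
      rcases eq_or_lt_of_le ha with rfl | ha'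
      · have hbpos : (0:ℝ) < b := by linarith
        have := mul_lt_mul_of_pos_left hq2 hbpos
        simpa using this
      · exact add_lt_add_of_lt_of_le (mul_lt_mul_of_pos_left hp2 ha') hle2
    exact lt_of_le_of_lt (huineq hp1 hq1 ha hb hab) hstrict
  have hCconv : Convex ℝ C := by
    rintro ⟨p1, p2⟩ ⟨hp1, hpX, hp2⟩ ⟨q1, q2⟩ ⟨hq1, hqX, hq2⟩ a b ha hb hab
    simp only [hC, mem_setOf_eq, Prod.smul_mk, Prod.mk_add_mk, smul_eq_mul] at *
    refine ⟨(convex_ball x ε) hp1 hq1 ha hb hab, hXcv hpX hqX ha hb hab, ?_⟩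
    have hRi := hR.2 (mem_univ p1) (mem_univ q1) ha hb hab
    simp only [smul_eq_mul] at hRi
    have hRx : a * Rf x + b * Rf x = Rf x := by rw [← add_mul, hab, one_mul]
    nlinarith [hRi, hRx, mul_le_mul_of_nonneg_left hp2 ha, mul_le_mul_of_nonneg_left hq2 hb]
  have hdisj : Disjoint A C := by
    rw [Set.disjoint_left]
    rintro ⟨y, t⟩ ⟨hy1, hy2⟩ ⟨hz1, hz2, hz3⟩
    have := hh y ⟨hz1, hz2⟩
    simp only [hu] at hy2
    simp only at hy2 hz3
    linarith
  obtain ⟨ℓ, c, hlA, hlC⟩ := geometric_hahn_banach_open hAconv hAopen hCconv hdisj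
  set α := ℓ (0, 1) with hα
  have hsplit : ∀ y t, ℓ (y, t) = ℓ (y, 0) + t * α := by
    intro y t
    have hyt : (y, t) = (y, (0:ℝ)) + t • ((0:E), (1:ℝ)) := by
      simp [Prod.ext_iff]
    rw [hyt, map_add, ℓ.map_smul, smul_eq_mul]
  have hxA : ∀ t > (0:ℝ), ℓ (x, 0) + t * α < c := by
    intro t ht
    have hmem : ((x, t) : E × ℝ) ∈ A := by
      refine ⟨mem_ball_self hε, ?_⟩
      simp only [hu]
      simpa using ht
    have := hlA _ hmem
    rwa [hsplit] at this
  have hxC : c ≤ ℓ (x, 0) := by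
    have hmem : ((x, 0) : E × ℝ) ∈ C := ⟨mem_ball_self hε, hx, by simp⟩
    have := hlC _ hmem
    rwa [hsplit, zero_mul, add_zero] at this
  have hαneg : α < 0 := by
    by_contra hge
    push_neg at hge
    have h1 := hxA 1 one_pos
    nlinarith
  set β := -α with hβ
  have hβpos : 0 < β := by simp [hβ]; linarith
  have hup : ∀ y ∈ ball x ε, ℓ (y, 0) + α * u y ≤ c := by
    intro y hy
    have hall : ∀ δ > (0:ℝ), ℓ (y, 0) + (u y + δ) * α < c := by
      intro δ hδ
      have hmem : ((y, u y + δ) : E × ℝ) ∈ A := ⟨hy, by simp; linarith⟩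
      have := hlA _ hmem
      rwa [hsplit] at this
    by_contra hlt
    push_neg at hlt
    set δ := (ℓ (y, 0) + α * u y - c) / β with hδdef
    have hδpos : 0 < δ := div_pos (by linarith) hβpos
    have h2 := hall δ hδpos
    have hδα : δ * β = ℓ (y, 0) + α * u y - c := div_mul_cancel₀ _ (ne_of_gt hβpos)
    have hβα : β = -α := rfl
    nlinarith [h2, hδα]
  have hdown : ∀ y, y ∈ ball x ε → y ∈ X → c ≤ ℓ (y, 0) + (Rf x - Rf y) * α := by
    intro y hy hyX
    have hmem : ((y, Rf x - Rf y) : E × ℝ) ∈ C := ⟨hy, hyX, le_refl _⟩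
    have := hlC _ hmem
    rwa [hsplit] at this
  have hcx : c = ℓ (x, 0) := by
    have h1 := hup x (mem_ball_self hε)
    have hux : u x = 0 := by simp [hu]
    rw [hux, mul_zero, add_zero] at h1
    linarith
  set L : E →L[ℝ] ℝ := ℓ.comp (ContinuousLinearMap.inl ℝ E ℝ) with hL
  have hLy : ∀ y, L y = ℓ (y, 0) := fun y => rfl
  set v : E := (InnerProductSpace.toDual ℝ E).symm (β⁻¹ • L) with hv
  have hvz : ∀ z, ⟪v, z⟫_ℝ = β⁻¹ * ℓ (z, 0) := by
    intro z
    rw [hv, InnerProductSpace.toDual_symm_apply]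
    simp [hLy]
  have hvin : ∀ y : E, ⟪v, y - x⟫_ℝ = β⁻¹ * (ℓ (y, 0) - ℓ (x, 0)) := by
    intro y
    rw [hvz (y - x)]
    congr 1
    have : ℓ ((y - x, 0) : E × ℝ) = ℓ (y, 0) - ℓ (x, 0) := by
      rw [show ((y - x, (0:ℝ)) : E × ℝ) = (y, 0) - (x, 0) by simp [Prod.ext_iff], map_sub]
    rw [this]
  refine ⟨v, ?_, ?_⟩
  · intro y hy
    have h1 := hup y hy
    -- β * u y ≥ ℓ(y,0) - ℓ(x,0)
    have h2 : ℓ (y, 0) - ℓ (x, 0) ≤ β * u y := by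
      rw [← hcx]
      have : α * u y = -(β * u y) := by rw [hβ]; ring
      linarith [h1, this.symm.le]
    have h3 : ⟪v, y - x⟫_ℝ ≤ u y := by
      rw [hvin y]
      calc β⁻¹ * (ℓ (y, 0) - ℓ (x, 0)) ≤ β⁻¹ * (β * u y) :=
            mul_le_mul_of_nonneg_left h2 (inv_nonneg.mpr hβpos.le)
        _ = u y := by field_simp
    have hip : ⟪h + v, y - x⟫_ℝ = ⟪h, y - x⟫_ℝ + ⟪v, y - x⟫_ℝ := inner_add_left _ _ _
    simp only [hu] at h3
    rw [hip]
    linarith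
  · rintro y ⟨hy, hyX⟩
    have h1 := hdown y hy hyX
    have h2 : β * (Rf x - Rf y) ≤ ℓ (y, 0) - ℓ (x, 0) := by
      rw [hcx] at h1
      have : (Rf x - Rf y) * α = -(β * (Rf x - Rf y)) := by rw [hβ]; ring
      linarith [h1, this.le]
    have h3 : Rf x - Rf y ≤ ⟪v, y - x⟫_ℝ := by
      rw [hvin y]
      calc Rf x - Rf y = β⁻¹ * (β * (Rf x - Rf y)) := by field_simp
        _ ≤ β⁻¹ * (ℓ (y, 0) - ℓ (x, 0)) :=
            mul_le_mul_of_nonneg_left h2 (inv_nonneg.mpr hβpos.le)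
    rw [inner_neg_left]
    linarith
end Part2
section Part3
open Pointwise
set_option maxHeartbeats 1000000
variable {E : Type*} [NormedAddCommGroup E] [InnerProductSpace ℝ E]

lemma keyB [FiniteDimensional ℝ E] {f₁ f₂ : E → ℝ} {x : E} {ε l₁ l₂ : ℝ}
    (hε : 0 < ε) (hl₁ : 0 ≤ l₁) (hl₂ : 0 ≤ l₂)
    (hc₁ : ConvexOn ℝ (ball x ε) (fun y => f₁ y + l₁ / 2 * ‖y‖ ^ 2))
    (hc₂ : ConvexOn ℝ (ball x ε) (fun y => f₂ y + l₂ / 2 * ‖y‖ ^ 2))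
    {rr : ℝ} (hrr : 0 ≤ rr)
    (hsel : ∀ y ∈ ball x ε, ∃ g₁ ∈ fsubdiff f₁ y, ∃ g₂ ∈ fsubdiff f₂ y, ‖g₁ - g₂‖ ≤ rr)
    {a : E} (ha : a ∈ ballSG (fun y => f₁ y + l₁ / 2 * ‖y‖ ^ 2) x (ball x ε)) :
    ∃ k ∈ ballSG (fun y => f₂ y + l₂ / 2 * ‖y‖ ^ 2) x (ball x ε),
      ‖(a - l₁ • x) - (k - l₂ • x)‖ ≤ rr := by
  set F₁ : E → ℝ := fun y => f₁ y + l₁ / 2 * ‖y‖ ^ 2 with hF₁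
  set F₂ : E → ℝ := fun y => f₂ y + l₂ / 2 * ‖y‖ ^ 2 with hF₂
  have hmemball : ∀ (w : E) (s : ℝ), 0 < s → (x + s • w ∈ ball x ε ↔ s * ‖w‖ < ε) := by
    intro w s hs
    rw [mem_ball, dist_eq_norm, add_sub_cancel_left, norm_smul, Real.norm_eq_abs, abs_of_pos hs]
  set slope : E → ℝ → ℝ := fun w s => (F₂ (x + s • w) - F₂ x) / s with hslope
  set adm : E → Set ℝ := fun w => {s | 0 < s ∧ s * ‖w‖ < ε} with hadm
  set S : E → Set ℝ := fun w => slope w '' adm w with hS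
  set q : E → ℝ := fun w => sInf (S w) with hq
  have hadm_ne : ∀ w : E, ε / (2 * (‖w‖ + 1)) ∈ adm w := by
    intro w
    constructor
    · positivity
    · have h1 : ε / (2 * (‖w‖ + 1)) * ‖w‖ ≤ ε / (2 * (‖w‖ + 1)) * (‖w‖ + 1) := by
        apply mul_le_mul_of_nonneg_left (by linarith) (by positivity)
      have h2 : ε / (2 * (‖w‖ + 1)) * (‖w‖ + 1) = ε / 2 := by
        field_simp
      linarith
  have hSne : ∀ w, (S w).Nonempty := fun w => ⟨_, ⟨_, hadm_ne w, rfl⟩⟩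
  -- slope is monotone
  have hmono : ∀ (w : E) (s s' : ℝ), 0 < s → s ≤ s' → s' * ‖w‖ < ε →
      slope w s ≤ slope w s' := by
    intro w s s' hs hss' hsw
    have hs' : 0 < s' := lt_of_lt_of_le hs hss'
    have hz' : x + s' • w ∈ ball x ε := (hmemball w s' hs').mpr hsw
    have hcomb : (1 - s/s') • x + (s/s') • (x + s' • w) = x + s • w := by
      rw [smul_add, smul_smul, div_mul_cancel₀ _ (ne_of_gt hs'), sub_smul, one_smul]
      abel
    have hcx := hc₂.2 (mem_ball_self hε) hz' (sub_nonneg.mpr (div_le_one_of_le₀ hss' hs'.le))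
      (show (0:ℝ) ≤ s/s' by positivity) (show 1 - s/s' + s/s' = 1 by ring)
    rw [hcomb] at hcx
    simp only [smul_eq_mul, ← hF₂] at hcx
    have key' : s' * F₂ (x + s • w) ≤ (s' - s) * F₂ x + s * F₂ (x + s' • w) := by
      have h := mul_le_mul_of_nonneg_left hcx hs'.le
      have e1 : s' * ((1 - s/s') * F₂ x + s/s' * F₂ (x + s' • w))
          = (s' - s) * F₂ x + s * F₂ (x + s' • w) := by
        field_simp
        try ring
      exact h.trans e1.le
    show (F₂ (x + s • w) - F₂ x) / s ≤ (F₂ (x + s' • w) - F₂ x) / s'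
    rw [div_le_div_iff₀ hs hs']
    nlinarith [key']
  -- lower bound for slopes
  have hlb : ∀ (w : E) (s₀ : ℝ), s₀ ∈ adm (-w) → ∀ r ∈ S w, -(slope (-w) s₀) ≤ r := by
    rintro w s₀ ⟨hs₀, hs₀w⟩ r ⟨s, ⟨hs, hsw⟩, rfl⟩
    rw [norm_neg] at hs₀w
    have hz1 : x + s • w ∈ ball x ε := (hmemball w s hs).mpr hsw
    have hz2 : x + s₀ • (-w) ∈ ball x ε := by
      rw [hmemball _ _ hs₀, norm_neg]; exact hs₀w
    set c1 : ℝ := s₀ / (s + s₀) with hc1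
    set c2 : ℝ := s / (s + s₀) with hc2
    have hss₀ : 0 < s + s₀ := by linarith
    have hpt : c1 • (x + s • w) + c2 • (x + s₀ • (-w)) = x := by
      have hc12 : c1 + c2 = 1 := by
        rw [hc1, hc2, ← add_div, add_comm s₀ s, div_self (ne_of_gt hss₀)]
      have hc3 : c1 * s - c2 * s₀ = 0 := by rw [hc1, hc2]; ring
      rw [smul_add, smul_add, smul_smul, smul_smul, smul_neg]
      rw [show c1 • x + (c1 * s) • w + (c2 • x + -((c2 * s₀) • w))
          = (c1 + c2) • x + (c1 * s - c2 * s₀) • w by module]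
      rw [hc12, hc3, one_smul, zero_smul, add_zero]
    have hcx := hc₂.2 hz1 hz2 (by positivity : (0:ℝ) ≤ c1) (by positivity : (0:ℝ) ≤ c2)
      (show c1 + c2 = 1 by
        rw [hc1, hc2, ← add_div, add_comm s₀ s, div_self (ne_of_gt hss₀)])
    rw [hpt] at hcx
    simp only [smul_eq_mul, ← hF₂] at hcx
    have key' : (s + s₀) * F₂ x ≤ s₀ * F₂ (x + s • w) + s * F₂ (x + s₀ • (-w)) := by
      have h := mul_le_mul_of_nonneg_left hcx hss₀.le
      have e1 : (s + s₀) * (c1 * F₂ (x + s • w) + c2 * F₂ (x + s₀ • (-w)))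
          = s₀ * F₂ (x + s • w) + s * F₂ (x + s₀ • (-w)) := by
        rw [hc1, hc2]
        field_simp
        try ring
      exact h.trans e1.le
    show -((F₂ (x + s₀ • (-w)) - F₂ x) / s₀) ≤ (F₂ (x + s • w) - F₂ x) / s
    rw [neg_div', div_le_div_iff₀ hs₀ hs]
    nlinarith [key']
  have hbdd : ∀ w : E, BddBelow (S w) :=
    fun w => ⟨-(slope (-w) (ε / (2 * (‖(-w)‖ + 1)))), fun r hr => hlb w _ (hadm_ne (-w)) r hr⟩
  have hq_le : ∀ (w : E) (s : ℝ), s ∈ adm w → q w ≤ slope w s :=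
    fun w s hs => csInf_le (hbdd w) ⟨s, hs, rfl⟩
  have hq_lb : ∀ (w : E) (s₀ : ℝ), s₀ ∈ adm (-w) → -(slope (-w) s₀) ≤ q w :=
    fun w s₀ hs₀ => le_csInf (hSne w) (hlb w s₀ hs₀)
  have hslope0 : ∀ s : ℝ, slope 0 s = 0 := by
    intro s
    show (F₂ (x + s • (0:E)) - F₂ x) / s = 0
    rw [smul_zero, add_zero, sub_self, zero_div]
  have hq0 : q 0 = 0 := by
    apply le_antisymm
    · have := hq_le 0 _ (hadm_ne 0)
      rwa [hslope0] at this
    · have := hq_lb 0 _ (by rw [neg_zero]; exact hadm_ne 0)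
      rw [neg_zero] at this
      rwa [hslope0, neg_zero] at this
  have hqH : ∀ c : ℝ, 0 < c → ∀ w : E, q (c • w) = c * q w := by
    intro c hc w
    have hSeq : S (c • w) = c • S w := by
      ext r
      constructor
      · rintro ⟨s, ⟨hs, hsw⟩, rfl⟩
        refine ⟨slope w (s * c), ⟨s * c, ⟨by positivity, ?_⟩, rfl⟩, ?_⟩
        · rw [norm_smul, Real.norm_eq_abs, abs_of_pos hc] at hsw
          calc s * c * ‖w‖ = s * (c * ‖w‖) := by ring
            _ < ε := hsw
        · show c * slope w (s * c) = slope (c • w) s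
          show c * ((F₂ (x + (s * c) • w) - F₂ x) / (s * c)) = (F₂ (x + s • (c • w)) - F₂ x) / s
          rw [smul_smul s c w]
          rw [eq_div_iff (ne_of_gt hs)]
          field_simp
      · rintro ⟨r', ⟨s, ⟨hs, hsw⟩, rfl⟩, rfl⟩
        refine ⟨s / c, ⟨by positivity, ?_⟩, ?_⟩
        · rw [norm_smul, Real.norm_eq_abs, abs_of_pos hc]
          calc s / c * (c * ‖w‖) = s * ‖w‖ := by
                field_simp
                try ring
            _ < ε := hsw
        · show slope (c • w) (s / c) = c * slope w s
          show (F₂ (x + (s / c) • (c • w)) - F₂ x) / (s / c) = c * ((F₂ (x + s • w) - F₂ x) / s)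
          rw [smul_smul (s / c) c w, div_mul_cancel₀ _ (ne_of_gt hc), div_div_eq_mul_div]
          ring
    show sInf (S (c • w)) = c * sInf (S w)
    rw [hSeq, Real.sInf_smul_of_nonneg hc.le, smul_eq_mul]
  have hqA : ∀ w₁ w₂ : E, q (w₁ + w₂) ≤ q w₁ + q w₂ := by
    intro w₁ w₂
    refine le_of_forall_pos_le_add ?_
    intro η hη
    obtain ⟨r₁, ⟨s₁, hs₁adm, rfl⟩, hr₁⟩ :=
      exists_lt_of_csInf_lt (hSne w₁) (show sInf (S w₁) < q w₁ + η/2 by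
        rw [hq]; simp only []; linarith)
    obtain ⟨r₂, ⟨s₂, hs₂adm, rfl⟩, hr₂⟩ :=
      exists_lt_of_csInf_lt (hSne w₂) (show sInf (S w₂) < q w₂ + η/2 by
        rw [hq]; simp only []; linarith)
    obtain ⟨hs₁, hs₁w⟩ := hs₁adm
    obtain ⟨hs₂, hs₂w⟩ := hs₂adm
    set s := min s₁ s₂ / 2 with hsdef
    have hs0 : 0 < s := by positivity
    have h2s₁ : 2 * s ≤ s₁ := by
      rw [hsdef]; have := min_le_left s₁ s₂; linarith
    have h2s₂ : 2 * s ≤ s₂ := by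
      rw [hsdef]; have := min_le_right s₁ s₂; linarith
    have h2sw₁ : 2 * s * ‖w₁‖ < ε :=
      lt_of_le_of_lt (mul_le_mul_of_nonneg_right h2s₁ (norm_nonneg _)) hs₁w
    have h2sw₂ : 2 * s * ‖w₂‖ < ε :=
      lt_of_le_of_lt (mul_le_mul_of_nonneg_right h2s₂ (norm_nonneg _)) hs₂w
    have hsadm : s ∈ adm (w₁ + w₂) := by
      refine ⟨hs0, ?_⟩
      have := norm_add_le w₁ w₂
      have h1 : s * ‖w₁ + w₂‖ ≤ s * ‖w₁‖ + s * ‖w₂‖ := by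
        rw [← mul_add]
        exact mul_le_mul_of_nonneg_left this hs0.le
      nlinarith [h2sw₁, h2sw₂, hs0, norm_nonneg w₁, norm_nonneg w₂]
    have hmid : slope (w₁ + w₂) s ≤ slope w₁ (2*s) + slope w₂ (2*s) := by
      have hz1 : x + (2*s) • w₁ ∈ ball x ε := (hmemball _ _ (by positivity)).mpr h2sw₁
      have hz2 : x + (2*s) • w₂ ∈ ball x ε := (hmemball _ _ (by positivity)).mpr h2sw₂
      have hcomb : (1/2 : ℝ) • (x + (2*s) • w₁) + (1/2 : ℝ) • (x + (2*s) • w₂)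
          = x + s • (w₁ + w₂) := by
        rw [show s • (w₁ + w₂) = s • w₁ + s • w₂ by rw [smul_add]]
        rw [smul_add, smul_add, smul_smul, smul_smul]
        norm_num
        module
      have hcx := hc₂.2 hz1 hz2 (by norm_num : (0:ℝ) ≤ 1/2) (by norm_num : (0:ℝ) ≤ 1/2)
        (show (1:ℝ)/2 + 1/2 = 1 by norm_num)
      rw [hcomb] at hcx
      simp only [smul_eq_mul, ← hF₂] at hcx
      show (F₂ (x + s • (w₁ + w₂)) - F₂ x) / s
          ≤ (F₂ (x + (2*s) • w₁) - F₂ x) / (2*s) + (F₂ (x + (2*s) • w₂) - F₂ x) / (2*s)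
      rw [← add_div, div_le_div_iff₀ hs0 (by positivity : (0:ℝ) < 2*s)]
      have h := mul_le_mul_of_nonneg_left hcx (le_of_lt (by positivity : (0:ℝ) < 2*s))
      calc (F₂ (x + s • (w₁ + w₂)) - F₂ x) * (2*s)
          = (2*s) * F₂ (x + s • (w₁ + w₂)) - (2*s) * F₂ x := by ring
        _ ≤ (2*s) * (1/2 * F₂ (x + (2*s) • w₁) + 1/2 * F₂ (x + (2*s) • w₂)) - (2*s) * F₂ x :=
            sub_le_sub_right h _
        _ = (F₂ (x + (2*s) • w₁) - F₂ x + (F₂ (x + (2*s) • w₂) - F₂ x)) * s := by ring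
    have hm₁ : slope w₁ (2*s) ≤ slope w₁ s₁ := hmono w₁ (2*s) s₁ (by positivity) h2s₁ hs₁w
    have hm₂ : slope w₂ (2*s) ≤ slope w₂ s₂ := hmono w₂ (2*s) s₂ (by positivity) h2s₂ hs₂w
    have := hq_le (w₁ + w₂) s hsadm
    linarith
  have hq_sub : ∀ y ∈ ball x ε, q (y - x) ≤ F₂ y - F₂ x := by
    intro y hy
    have h1adm : (1:ℝ) ∈ adm (y - x) := ⟨one_pos, by rw [one_mul]; exact mem_ball_iff_norm.mp hy⟩
    have := hq_le (y - x) 1 h1adm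
    calc q (y - x) ≤ slope (y - x) 1 := this
      _ = F₂ y - F₂ x := by
          show (F₂ (x + (1:ℝ) • (y - x)) - F₂ x) / 1 = F₂ y - F₂ x
          rw [one_smul, div_one, add_sub_cancel]
  have hHB : ∀ d : E, d ≠ 0 → ∃ k : E, (∀ z : E, ⟪k, z⟫_ℝ ≤ q z) ∧ ⟪k, d⟫_ℝ = q d := by
    intro d hd0
    set pL : E →ₗ.[ℝ] ℝ := LinearPMap.mkSpanSingleton (K := ℝ) d (q d) hd0 with hpL
    have hdmem : d ∈ pL.domain := Submodule.mem_span_singleton_self d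
    have hdom : ∀ z : pL.domain, pL z ≤ q z := by
      rintro ⟨z, hz⟩
      obtain ⟨cc, rfl⟩ := Submodule.mem_span_singleton.mp hz
      have hded : (⟨cc • d, hz⟩ : pL.domain) = cc • (⟨d, hdmem⟩ : pL.domain) := rfl
      show (pL ⟨cc • d, hz⟩ : ℝ) ≤ q (cc • d)
      rw [hded, pL.map_smul, LinearPMap.mkSpanSingleton_apply, smul_eq_mul]
      rcases lt_trichotomy cc 0 with hcc | hcc | hcc
      · have h1 : q (cc • d) + q (-(cc • d)) ≥ 0 := by
          have := hqA (cc • d) (-(cc • d))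
          rw [add_neg_cancel, hq0] at this
          linarith
        have h2 : q (-(cc • d)) = -cc * q d := by
          rw [show -(cc • d) = (-cc) • d by rw [neg_smul]]
          exact hqH (-cc) (by linarith) d
        nlinarith [h1, h2]
      · subst hcc
        rw [zero_smul, zero_mul, hq0]
      · rw [hqH cc hcc d]
    obtain ⟨g, hg1, hg2⟩ := exists_extension_of_le_sublinear pL q
      (fun c hc w => hqH c hc w) hqA hdom
    set k : E := (InnerProductSpace.toDual ℝ E).symm (LinearMap.toContinuousLinearMap g) with hk
    have hkz : ∀ z : E, ⟪k, z⟫_ℝ = g z := by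
      intro z
      rw [hk, InnerProductSpace.toDual_symm_apply]
      rfl
    refine ⟨k, fun z => by rw [hkz]; exact hg2 z, ?_⟩
    rw [hkz]
    have := hg1 ⟨d, hdmem⟩
    rw [this, LinearPMap.mkSpanSingleton_apply]
  have hballSG_of_le : ∀ k : E, (∀ z : E, ⟪k, z⟫_ℝ ≤ q z) → k ∈ ballSG F₂ x (ball x ε) := by
    intro k hk y hy
    have := hk (y - x)
    have h2 := hq_sub y hy
    linarith
  -- main directional estimate
  have hdir : ∀ d : E, ‖d‖ = 1 → ⟪a - l₁ • x + l₂ • x, d⟫_ℝ ≤ rr + q d := by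
    intro d hd1
    refine le_of_forall_pos_le_add ?_
    intro η hη
    obtain ⟨r₁, ⟨s₁, ⟨hs₁, hs₁w⟩, rfl⟩, hr₁⟩ :=
      exists_lt_of_csInf_lt (hSne d) (show sInf (S d) < q d + η/3 by
        rw [hq]; simp only []; linarith)
    set t := min (s₁/2) (η/(3*(l₁+l₂+1))) with htdef
    have ht0 : 0 < t := lt_min (by positivity) (by positivity)
    have h2ts₁ : 2*t ≤ s₁ := by
      have := min_le_left (s₁/2) (η/(3*(l₁+l₂+1))); rw [htdef]; linarith
    have hs₁ε : s₁ < ε := by rw [hd1, mul_one] at hs₁w; exact hs₁w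
    have htε : t < ε := by
      have := min_le_left (s₁/2) (η/(3*(l₁+l₂+1)))
      rw [htdef]; linarith
    set yt := x + t • d with hyt
    have hytball : yt ∈ ball x ε := (hmemball d t ht0).mpr (by rw [hd1, mul_one]; exact htε)
    obtain ⟨g₁, hg₁, g₂, hg₂, hgd⟩ := hsel _ hytball
    have hb₁ := frechet_to_ball hl₁ hc₁ hytball hg₁
    have hb₂ := frechet_to_ball hl₂ hc₂ hytball hg₂
    have hytx : yt - x = t • d := by rw [hyt]; abel
    have hxyt : x - yt = -(t • d) := by rw [hyt]; abel
    have hdd : ⟪d, d⟫_ℝ = 1 := by rw [real_inner_self_eq_norm_sq, hd1]; norm_num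
    have hinyt : ⟪yt, d⟫_ℝ = ⟪x, d⟫_ℝ + t := by
      rw [hyt, inner_add_left, real_inner_smul_left, hdd, mul_one]
    -- step A : ⟪a, d⟫ ≤ ⟪g₁, d⟫ + l₁ * ⟪x,d⟫ + l₁ * t
    have hA1 := ha _ hytball
    rw [hytx, real_inner_smul_right] at hA1
    have hA2 := hb₁ x (mem_ball_self hε)
    rw [hxyt, inner_neg_right, real_inner_smul_right, inner_add_left,
      real_inner_smul_left, hinyt] at hA2
    replace hA2 : F₁ yt + -(t * (⟪g₁, d⟫_ℝ + l₁ * (⟪x, d⟫_ℝ + t))) ≤ F₁ x := hA2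
    have hstepA : ⟪a, d⟫_ℝ ≤ ⟪g₁, d⟫_ℝ + l₁ * ⟪x, d⟫_ℝ + l₁ * t := by
      have h3 : t * ⟪a, d⟫_ℝ ≤ t * (⟪g₁, d⟫_ℝ + l₁ * ⟪x, d⟫_ℝ + l₁ * t) := by nlinarith [hA1, hA2]
      exact (mul_le_mul_iff_right₀ ht0).mp h3
    -- step B : Cauchy-Schwarz
    have hCS : ⟪g₁, d⟫_ℝ ≤ ⟪g₂, d⟫_ℝ + rr := by
      have h1 := real_inner_le_norm (g₁ - g₂) d
      rw [inner_sub_left, hd1, mul_one] at h1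
      linarith
    -- step C
    have hz2ball : x + (2*t) • d ∈ ball x ε := by
      rw [hmemball d (2*t) (by positivity), hd1, mul_one]
      linarith
    have hB2 := hb₂ _ hz2ball
    have hz2yt : (x + (2*t) • d) - yt = t • d := by
      rw [hyt, show (x + (2*t) • d) - (x + t • d) = (2*t) • d - t • d by abel, ← sub_smul,
        show 2*t - t = t by ring]
    rw [hz2yt, real_inner_smul_right, inner_add_left, real_inner_smul_left, hinyt] at hB2
    replace hB2 : F₂ yt + t * (⟪g₂, d⟫_ℝ + l₂ * (⟪x, d⟫_ℝ + t)) ≤ F₂ (x + (2*t) • d) := hB2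
    -- slopes
    have hslope2t : (2*t) * slope d (2*t) = F₂ (x + (2*t) • d) - F₂ x := by
      show (2*t) * ((F₂ (x + (2*t) • d) - F₂ x) / (2*t)) = _
      field_simp
    have hslopet : t * slope d t = F₂ yt - F₂ x := by
      show t * ((F₂ yt - F₂ x) / t) = _
      field_simp
    have hm2t : slope d (2*t) ≤ slope d s₁ := hmono d (2*t) s₁ (by positivity) h2ts₁ hs₁w
    have hqt : q d ≤ slope d t := hq_le d t ⟨ht0, by rw [hd1, mul_one]; exact htε⟩
    have hstepC : ⟪g₂, d⟫_ℝ + l₂ * ⟪x, d⟫_ℝ + l₂ * t ≤ q d + 2 * (η/3) := by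
      have h4 : t * (⟪g₂, d⟫_ℝ + l₂ * ⟪x, d⟫_ℝ + l₂ * t)
          ≤ F₂ (x + (2*t) • d) - F₂ yt := by
        nlinarith [hB2]
      have h5 : F₂ (x + (2*t) • d) - F₂ yt
          = (2*t) * slope d (2*t) - t * slope d t := by
        rw [hslope2t, hslopet]; ring
      have h6 : (2*t) * slope d (2*t) - t * slope d t ≤ t * (q d + 2 * (η/3)) := by
        have h7 : slope d (2*t) ≤ q d + η/3 := le_trans hm2t (le_of_lt hr₁)
        nlinarith [hqt, h7, ht0]
      have h8 : t * (⟪g₂, d⟫_ℝ + l₂ * ⟪x, d⟫_ℝ + l₂ * t) ≤ t * (q d + 2 * (η/3)) := by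
        linarith [h4, h5.le, h6]
      exact (mul_le_mul_iff_right₀ ht0).mp h8
    -- combine
    have hlt : (l₁ + l₂) * t ≤ η/3 := by
      have h9 : t ≤ η/(3*(l₁+l₂+1)) := min_le_right _ _
      have h10 : (l₁ + l₂) * t ≤ (l₁ + l₂ + 1) * (η/(3*(l₁+l₂+1))) := by
        apply mul_le_mul (by linarith) h9 ht0.le (by linarith)
      have h11 : (l₁ + l₂ + 1) * (η/(3*(l₁+l₂+1))) = η/3 := by
        field_simp
        try ring
      linarith
    rw [inner_add_left, inner_sub_left, real_inner_smul_left, real_inner_smul_left]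
    have : ⟪a, d⟫_ℝ ≤ rr + q d + 2*(η/3) + l₁ * ⟪x, d⟫_ℝ - l₂ * ⟪x, d⟫_ℝ + (l₁ + l₂) * t := by
      nlinarith [hstepA, hCS, hstepC]
    linarith
  -- now put it together using projection onto K'
  rcases subsingleton_or_nontrivial E with hss | hnt
  · refine ⟨l₂ • x, ?_, ?_⟩
    · intro y hy
      have hyx : y = x := Subsingleton.elim y x
      subst hyx
      simp
    · have : a - l₁ • x - (l₂ • x - l₂ • x) = 0 := Subsingleton.elim _ _
      rw [this, norm_zero]
      exact hrr
  · set u0 : E := a - l₁ • x with hu0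
    set K' : Set E := {w | ∀ y ∈ ball x ε, F₂ x + ⟪w + l₂ • x, y - x⟫_ℝ ≤ F₂ y} with hK'
    have hK'ball : ∀ w ∈ K', w + l₂ • x ∈ ballSG F₂ x (ball x ε) := fun w hw => hw
    have hK'ne : K'.Nonempty := by
      obtain ⟨d₀, hd₀⟩ := exists_ne (0 : E)
      obtain ⟨k, hk, -⟩ := hHB d₀ hd₀
      refine ⟨k - l₂ • x, ?_⟩
      intro y hy
      rw [sub_add_cancel]
      exact hballSG_of_le k hk y hy
    have hK'closed : IsClosed K' := by
      have heq : K' = ⋂ y ∈ ball x ε, {w : E | F₂ x + ⟪w + l₂ • x, y - x⟫_ℝ ≤ F₂ y} := by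
        ext w; simp [hK', mem_iInter]
      rw [heq]
      apply isClosed_biInter
      intro y hy
      apply isClosed_le _ continuous_const
      exact (continuous_const.add ((continuous_id.add continuous_const).inner continuous_const))
    have hK'conv : Convex ℝ K' := by
      intro w1 h1 w2 h2 α β hα hβ hαβ
      intro y hy
      have e1 : α • w1 + β • w2 + l₂ • x = α • (w1 + l₂ • x) + β • (w2 + l₂ • x) := by
        have hx1 : l₂ • x = (α + β) • (l₂ • x) := by rw [hαβ, one_smul]
        calc α • w1 + β • w2 + l₂ • x = α • w1 + β • w2 + (α + β) • (l₂ • x) := by rw [← hx1]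
          _ = α • (w1 + l₂ • x) + β • (w2 + l₂ • x) := by module
      rw [e1, inner_add_left, real_inner_smul_left, real_inner_smul_left]
      have i1 := h1 y hy
      have i2 := h2 y hy
      have e2 : α * F₂ x + β * F₂ x = F₂ x := by rw [← add_mul, hαβ, one_mul]
      have e3 : α * F₂ y + β * F₂ y = F₂ y := by rw [← add_mul, hαβ, one_mul]
      have j1 := mul_le_mul_of_nonneg_left i1 hα
      have j2 := mul_le_mul_of_nonneg_left i2 hβ
      nlinarith [j1, j2, e2, e3]
    obtain ⟨p, hpK, hpnorm⟩ :=
      exists_norm_eq_iInf_of_complete_convex hK'ne hK'closed.isComplete hK'conv u0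
    have hproj := (norm_eq_iInf_iff_real_inner_le_zero hK'conv hpK).mp hpnorm
    rcases eq_or_ne u0 p with he | hne
    · refine ⟨p + l₂ • x, hK'ball p hpK, ?_⟩
      rw [show a - l₁ • x - (p + l₂ • x - l₂ • x) = u0 - p by rw [hu0]; abel, he, sub_self,
        norm_zero]
      exact hrr
    · have hd0 : u0 - p ≠ 0 := sub_ne_zero_of_ne hne
      have hnp : 0 < ‖u0 - p‖ := norm_pos_iff.mpr hd0
      set d : E := ‖u0 - p‖⁻¹ • (u0 - p) with hd
      have hd1 : ‖d‖ = 1 := by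
        rw [hd, norm_smul, norm_inv, norm_norm, inv_mul_cancel₀ (ne_of_gt hnp)]
      have hdne : d ≠ 0 := by
        intro h0
        rw [h0, norm_zero] at hd1
        norm_num at hd1
      have h1 := hdir d hd1
      obtain ⟨k, hk_le, hk_eq⟩ := hHB d hdne
      have hkK : k - l₂ • x ∈ K' := by
        intro y hy
        rw [sub_add_cancel]
        exact hballSG_of_le k hk_le y hy
      have h2 : ⟪u0 - (k - l₂ • x), d⟫_ℝ ≤ rr := by
        have e3 : a - l₁ • x + l₂ • x = u0 + l₂ • x := by rw [hu0]
        rw [e3] at h1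
        rw [← hk_eq] at h1
        have e4 : ⟪u0 - (k - l₂ • x), d⟫_ℝ = ⟪u0 + l₂ • x, d⟫_ℝ - ⟪k, d⟫_ℝ := by
          rw [show u0 - (k - l₂ • x) = (u0 + l₂ • x) - k by abel, inner_sub_left]
        rw [e4]
        linarith
      have h3 : ⟪(k - l₂ • x) - p, d⟫_ℝ ≤ 0 := by
        have := hproj _ hkK
        rw [hd, real_inner_smul_right]
        have hcomm : ⟪k - l₂ • x - p, u0 - p⟫_ℝ = ⟪u0 - p, k - l₂ • x - p⟫_ℝ :=
          real_inner_comm _ _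
        rw [hcomm]
        exact mul_nonpos_of_nonneg_of_nonpos (inv_nonneg.mpr hnp.le) this
      have h4 : ⟪u0 - p, d⟫_ℝ = ‖u0 - p‖ := by
        rw [hd, real_inner_smul_right, real_inner_self_eq_norm_sq]
        field_simp
      have h5 : ‖u0 - p‖ ≤ rr := by
        have e5 : ⟪u0 - p, d⟫_ℝ = ⟪u0 - (k - l₂ • x), d⟫_ℝ + ⟪(k - l₂ • x) - p, d⟫_ℝ := by
          rw [← inner_add_left]
          congr 1
          abel
        rw [← h4] at *
        linarith [e5.le, e5.ge, h2, h3]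
      refine ⟨p + l₂ • x, hK'ball p hpK, ?_⟩
      rw [show a - l₁ • x - (p + l₂ • x - l₂ • x) = u0 - p by rw [hu0]; abel]
      exact h5
end Part3
section Part4
variable {E : Type*} [NormedAddCommGroup E] [InnerProductSpace ℝ E]

lemma oneSided [FiniteDimensional ℝ E] {f₁ f₂ R : E → ℝ} {X : Set E} (hXcv : Convex ℝ X)
    (hR : ConvexOn ℝ Set.univ R) {x : E} (hx : x ∈ X) {ε l₁ l₂ : ℝ}
    (hε : 0 < ε) (hl₁ : 0 ≤ l₁) (hl₂ : 0 ≤ l₂)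
    (hc₁ : ConvexOn ℝ (ball x ε) (fun y => f₁ y + l₁ / 2 * ‖y‖ ^ 2))
    (hc₂ : ConvexOn ℝ (ball x ε) (fun y => f₂ y + l₂ / 2 * ‖y‖ ^ 2))
    {r : ℝ≥0∞}
    (hsel : ∀ y ∈ ball x ε, ∃ g₁ ∈ fsubdiff f₁ y, ∃ g₂ ∈ fsubdiff f₂ y,
      ENNReal.ofReal ‖g₁ - g₂‖ ≤ r)
    {g : E}
    (hg : g ∈ fsubdiffE (fun y => ((f₁ y : ℝ) : EReal) + (R y : EReal) + indicatorE X y) x) :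
    EMetric.infEdist g
      (fsubdiffE (fun y => ((f₂ y : ℝ) : EReal) + (R y : EReal) + indicatorE X y) x) ≤ r := by
  rcases eq_or_ne r ⊤ with rfl | hrT
  · exact le_top
  have hrr0 : 0 ≤ r.toReal := ENNReal.toReal_nonneg
  have hsel' : ∀ y ∈ ball x ε, ∃ g₁ ∈ fsubdiff f₁ y, ∃ g₂ ∈ fsubdiff f₂ y,
      ‖g₁ - g₂‖ ≤ r.toReal := by
    intro y hy
    obtain ⟨g₁, h₁, g₂, h₂, hle⟩ := hsel y hy
    exact ⟨g₁, h₁, g₂, h₂, (ENNReal.ofReal_le_iff_le_toReal hrT).mp hle⟩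
  have hreal := (mem_fsubdiffE_iff hx).mp hg
  have hQconv : ConvexOn ℝ (ball x ε ∩ X) (fun y => (f₁ y + l₁ / 2 * ‖y‖ ^ 2) + R y) :=
    (hc₁.subset inter_subset_left ((convex_ball x ε).inter hXcv)).add
      (hR.subset (subset_univ _) ((convex_ball x ε).inter hXcv))
  have hev : ∀ ε' > (0:ℝ), ∀ᶠ w in 𝓝 x, w ∈ ball x ε ∩ X →
      ((f₁ x + l₁ / 2 * ‖x‖ ^ 2) + R x) + ⟪g + l₁ • x, w - x⟫_ℝ - ε' * ‖w - x‖
        ≤ (f₁ w + l₁ / 2 * ‖w‖ ^ 2) + R w := by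
    intro ε' hε'
    filter_upwards [hreal ε' hε'] with w hw hwS
    have h1 := hw hwS.2
    have h2 := sq_expand l₁ x w
    have hq : 0 ≤ l₁ / 2 * ‖w - x‖ ^ 2 := by positivity
    have hin : ⟪g + l₁ • x, w - x⟫_ℝ = ⟪g, w - x⟫_ℝ + ⟪l₁ • x, w - x⟫_ℝ := inner_add_left _ _ _
    rw [hin]
    linarith
  have hSG := localToGlobal hQconv ⟨mem_ball_self hε, hx⟩ hev
  obtain ⟨v, hv1, hv2⟩ := sumrule (F := fun y => f₁ y + l₁ / 2 * ‖y‖ ^ 2) (Rf := R) hXcv hx hε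
    hc₁ hR (h := g + l₁ • x) (fun y hy => hSG y hy)
  have haSG : (g + l₁ • x) + v ∈ ballSG (fun y => f₁ y + l₁ / 2 * ‖y‖ ^ 2) x (ball x ε) :=
    fun y hy => hv1 y hy
  obtain ⟨k, hk, hkd⟩ := keyB hε hl₁ hl₂ hc₁ hc₂ hrr0 hsel' haSG
  have hmem : (k + -v) - l₂ • x ∈
      fsubdiffE (fun y => ((f₂ y : ℝ) : EReal) + (R y : EReal) + indicatorE X y) x := by
    apply ball_to_fsubdiffE hx hε hl₂
    intro y hy
    have h1 : f₂ x + l₂ / 2 * ‖x‖ ^ 2 + ⟪k, y - x⟫_ℝ ≤ f₂ y + l₂ / 2 * ‖y‖ ^ 2 := hk y hy.1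
    have h2 := hv2 y hy
    have hin : ⟪k + -v, y - x⟫_ℝ = ⟪k, y - x⟫_ℝ + ⟪-v, y - x⟫_ℝ := inner_add_left _ _ _
    rw [hin]
    linarith
  refine le_trans (EMetric.infEdist_le_edist_of_mem hmem) ?_
  rw [edist_dist, dist_eq_norm]
  have hnorm : g - ((k + -v) - l₂ • x) = ((g + l₁ • x) + v - l₁ • x) - (k - l₂ • x) := by abel
  rw [hnorm]
  calc ENNReal.ofReal ‖(g + l₁ • x) + v - l₁ • x - (k - l₂ • x)‖
      ≤ ENNReal.ofReal r.toReal := ENNReal.ofReal_le_ofReal hkd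
    _ = r := ENNReal.ofReal_toReal hrT

lemma main_pt [FiniteDimensional ℝ E] {f₁ f₂ R : E → ℝ} {X : Set E} (hXcv : Convex ℝ X)
    (hR : ConvexOn ℝ Set.univ R) {x : E} (hx : x ∈ X) {ε l₁ l₂ : ℝ}
    (hε : 0 < ε) (hl₁ : 0 ≤ l₁) (hl₂ : 0 ≤ l₂)
    (hc₁ : ConvexOn ℝ (ball x ε) (fun y => f₁ y + l₁ / 2 * ‖y‖ ^ 2))
    (hc₂ : ConvexOn ℝ (ball x ε) (fun y => f₂ y + l₂ / 2 * ‖y‖ ^ 2))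
    {r : ℝ≥0∞}
    (hsel : ∀ y ∈ ball x ε, ∃ g₁ ∈ fsubdiff f₁ y, ∃ g₂ ∈ fsubdiff f₂ y,
      ENNReal.ofReal ‖g₁ - g₂‖ ≤ r) :
    EMetric.hausdorffEdist
      (fsubdiffE (fun y => ((f₁ y : ℝ) : EReal) + (R y : EReal) + indicatorE X y) x)
      (fsubdiffE (fun y => ((f₂ y : ℝ) : EReal) + (R y : EReal) + indicatorE X y) x) ≤ r := by
  have hsel2 : ∀ y ∈ ball x ε, ∃ g₂ ∈ fsubdiff f₂ y, ∃ g₁ ∈ fsubdiff f₁ y,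
      ENNReal.ofReal ‖g₂ - g₁‖ ≤ r := by
    intro y hy
    obtain ⟨g₁, h₁, g₂, h₂, hle⟩ := hsel y hy
    refine ⟨g₂, h₂, g₁, h₁, ?_⟩
    rwa [norm_sub_rev]
  apply EMetric.hausdorffEdist_le_of_infEdist
  · intro g hg
    exact oneSided hXcv hR hx hε hl₁ hl₂ hc₁ hc₂ hsel hg
  · intro g hg
    exact oneSided hXcv hR hx hε hl₂ hl₁ hc₂ hc₁ hsel2 hg

lemma convexOn_finset_sum {ι : Type*} (t : Finset ι) {s : Set E} (hs : Convex ℝ s)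
    {f : ι → E → ℝ} (h : ∀ i ∈ t, ConvexOn ℝ s (f i)) :
    ConvexOn ℝ s (fun y => ∑ i ∈ t, f i y) := by
  classical
  induction t using Finset.induction_on with
  | empty => simpa using convexOn_const (0:ℝ) hs
  | @insert a t hni ih =>
    simp only [Finset.sum_insert hni]
    exact (h a (Finset.mem_insert_self a t)).add (ih fun i hi => h i (Finset.mem_insert_of_mem hi))
end Part4

/-- For the population risk `φ = f + R + ι_X` and the empirical risk
`φ_S = f_S + R + ι_X`, under Assumptions A and B, for any selections `G, G_S` of `∂f, ∂f_S` on
the open set `O`, with probability one,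
`sup_{x ∈ O ∩ X} H(∂φ(x), ∂φ_S(x)) ≤ sup_{x ∈ O} ‖G(x) - G_S(x)‖`. -/
theorem statement5
    (d m : ℕ) (hm : 0 < m)
    (Ξ : Type*) [MeasurableSpace Ξ] (P : Measure Ξ) [IsProbabilityMeasure P]
    (f : EuclideanSpace ℝ (Fin d) → Ξ → ℝ) (hfmeas : ∀ x, Measurable (f x))
    (O : Set (EuclideanSpace ℝ (Fin d))) (hO : IsOpen O)
    (hA : ∀ x ∈ O, Integrable (f x) P)
    (hB : ∀ x ∈ O, ∃ ε > 0, ∃ lam : Ξ → ℝ, Measurable lam ∧ (∀ ξ, 0 ≤ lam ξ) ∧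
      Integrable lam P ∧
      ∀ ξ, ConvexOn ℝ (ball x ε) (fun y => f y ξ + lam ξ / 2 * ‖y‖ ^ 2))
    (R : EuclideanSpace ℝ (Fin d) → ℝ) (hR : ConvexOn ℝ Set.univ R)
    (X : Set (EuclideanSpace ℝ (Fin d))) (hXne : X.Nonempty) (hXcl : IsClosed X)
    (hXcv : Convex ℝ X)
    (G : EuclideanSpace ℝ (Fin d) → EuclideanSpace ℝ (Fin d))
    (hG : ∀ x ∈ O, G x ∈ fsubdiff (fun y => ∫ ξ, f y ξ ∂P) x)
    (GS : (Fin m → Ξ) → EuclideanSpace ℝ (Fin d) → EuclideanSpace ℝ (Fin d))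
    (hGS : ∀ ω, ∀ x ∈ O, GS ω x ∈ fsubdiff (fun y => (m : ℝ)⁻¹ * ∑ i, f y (ω i)) x) :
    ∀ᵐ ω ∂(Measure.pi fun _ : Fin m => P),
      (⨆ x ∈ O ∩ X,
        EMetric.hausdorffEdist
          (fsubdiffE (fun y => ((∫ ξ, f y ξ ∂P : ℝ) : EReal) + (R y : EReal) + indicatorE X y) x)
          (fsubdiffE (fun y =>
            (((m : ℝ)⁻¹ * ∑ i, f y (ω i) : ℝ) : EReal) + (R y : EReal) + indicatorE X y) x))
      ≤ ⨆ x ∈ O, ENNReal.ofReal ‖G x - GS ω x‖ := by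
  refine ae_of_all _ fun ω => ?_
  refine iSup₂_le fun x hx => ?_
  obtain ⟨hxO, hxX⟩ := hx
  obtain ⟨ε₀, hε₀, lam, hlam_meas, hlam_nonneg, hlam_int, hlam_conv⟩ := hB x hxO
  obtain ⟨ε₁, hε₁, hball₁⟩ := Metric.isOpen_iff.mp hO x hxO
  have hε : 0 < min ε₀ ε₁ := lt_min hε₀ hε₁
  have hballO : ball x (min ε₀ ε₁) ⊆ O := fun y hy =>
    hball₁ (mem_of_mem_of_subset hy (ball_subset_ball (min_le_right _ _)))
  have hl₁ : 0 ≤ ∫ ξ, lam ξ ∂P := integral_nonneg hlam_nonneg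
  have hl₂ : 0 ≤ (m : ℝ)⁻¹ * ∑ i, lam (ω i) :=
    mul_nonneg (inv_nonneg.mpr (Nat.cast_nonneg m))
      (Finset.sum_nonneg fun i _ => hlam_nonneg _)
  -- integrability of the shifted functions
  have hint : ∀ c ∈ ball x (min ε₀ ε₁), Integrable (fun ξ => f c ξ + lam ξ / 2 * ‖c‖ ^ 2) P :=
    fun c hc => (hA c (hballO hc)).add ((hlam_int.div_const 2).mul_const _)
  have hIc : ∀ c ∈ ball x (min ε₀ ε₁),
      ∫ ξ, (f c ξ + lam ξ / 2 * ‖c‖ ^ 2) ∂P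
        = (∫ ξ, f c ξ ∂P) + (∫ ξ, lam ξ ∂P) / 2 * ‖c‖ ^ 2 := by
    intro c hc
    rw [integral_add (hA c (hballO hc)) ((hlam_int.div_const 2).mul_const _)]
    congr 1
    rw [show (fun ξ => lam ξ / 2 * ‖c‖ ^ 2) = fun ξ => lam ξ * (‖c‖ ^ 2 / 2) from
      funext fun ξ => by ring]
    rw [integral_mul_const]
    ring
  -- convexity of population risk
  have hc₁ : ConvexOn ℝ (ball x (min ε₀ ε₁))
      (fun y => (∫ ξ, f y ξ ∂P) + (∫ ξ, lam ξ ∂P) / 2 * ‖y‖ ^ 2) := by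
    refine ⟨convex_ball x _, ?_⟩
    intro p hp qq hq ta tb hta htb htab
    have hcomb : ta • p + tb • qq ∈ ball x (min ε₀ ε₁) := (convex_ball x _) hp hq hta htb htab
    have hptwise : ∀ ξ, f (ta • p + tb • qq) ξ + lam ξ / 2 * ‖ta • p + tb • qq‖ ^ 2
        ≤ ta * (f p ξ + lam ξ / 2 * ‖p‖ ^ 2) + tb * (f qq ξ + lam ξ / 2 * ‖qq‖ ^ 2) := by
      intro ξ
      have := ((hlam_conv ξ).subset (ball_subset_ball (min_le_left _ _))
        (convex_ball x _)).2 hp hq hta htb htab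
      simpa [smul_eq_mul] using this
    have hInt2 : Integrable
        (fun ξ => ta * (f p ξ + lam ξ / 2 * ‖p‖ ^ 2) + tb * (f qq ξ + lam ξ / 2 * ‖qq‖ ^ 2)) P :=
      ((hint p hp).const_mul ta).add ((hint qq hq).const_mul tb)
    have hmono := integral_mono (hint _ hcomb) hInt2 hptwise
    rw [hIc _ hcomb] at hmono
    rw [integral_add ((hint p hp).const_mul ta) ((hint qq hq).const_mul tb),
      integral_const_mul, integral_const_mul, hIc p hp, hIc qq hq] at hmono
    simpa [smul_eq_mul] using hmono
  -- convexity of empirical risk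
  have hc₂ : ConvexOn ℝ (ball x (min ε₀ ε₁))
      (fun y => (m : ℝ)⁻¹ * ∑ i, f y (ω i) + ((m : ℝ)⁻¹ * ∑ i, lam (ω i)) / 2 * ‖y‖ ^ 2) := by
    have hsum : ConvexOn ℝ (ball x (min ε₀ ε₁))
        (fun y => ∑ i : Fin m, (f y (ω i) + lam (ω i) / 2 * ‖y‖ ^ 2)) :=
      convexOn_finset_sum Finset.univ (convex_ball x _)
        (fun i _ => (hlam_conv (ω i)).subset (ball_subset_ball (min_le_left _ _))
          (convex_ball x _))
    have hfun : (fun y => (m : ℝ)⁻¹ * ∑ i, f y (ω i)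
          + ((m : ℝ)⁻¹ * ∑ i, lam (ω i)) / 2 * ‖y‖ ^ 2)
        = fun y => (m : ℝ)⁻¹ • ∑ i : Fin m, (f y (ω i) + lam (ω i) / 2 * ‖y‖ ^ 2) := by
      funext y
      rw [smul_eq_mul, Finset.sum_add_distrib, mul_add]
      congr 1
      rw [← Finset.sum_mul, ← Finset.sum_div]
      ring
    rw [hfun]
    exact hsum.smul (inv_nonneg.mpr (Nat.cast_nonneg m))
  -- selections
  have hsel : ∀ y ∈ ball x (min ε₀ ε₁),
      ∃ g₁ ∈ fsubdiff (fun y => ∫ ξ, f y ξ ∂P) y,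
      ∃ g₂ ∈ fsubdiff (fun y => (m : ℝ)⁻¹ * ∑ i, f y (ω i)) y,
        ENNReal.ofReal ‖g₁ - g₂‖ ≤ ⨆ x ∈ O, ENNReal.ofReal ‖G x - GS ω x‖ := by
    intro y hy
    refine ⟨G y, hG y (hballO hy), GS ω y, hGS ω y (hballO hy), ?_⟩
    exact le_iSup₂ (f := fun x (_ : x ∈ O) => ENNReal.ofReal ‖G x - GS ω x‖) y (hballO hy)
  exact main_pt (f₁ := fun y => ∫ ξ, f y ξ ∂P)
    (f₂ := fun y => (m : ℝ)⁻¹ * ∑ i, f y (ω i)) hXcv hR hxX hε hl₁ hl₂ hc₁ hc₂ hsel
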